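/- arXiv:0810.3331 — 2 statements merged into one kernel-verified Lean document; each statement's English description precedes it below -/
import Mathlib

section
/- Let a, b, c be integers with gcd(a,b,c) = 1, d := b² − 4ac > 0, and let t, u be positive integers with t² − d·u² = 4. Let M = [[(t − bu)/2, a·u], [−c·u, (t + bu)/2]] (whose entries are integers). Then, writing M = [[a',b'],[c',d']], one has sign(a' + d') = 1, gcd(b', d' − a', −c') = u, and (1/u)·[b', d' − a', −c'] = [a, b, c]; that is, B(M) = [a,b,c]. -/
/-- Let `[a,b,c]` be a primitive integral binary quadratic form of
positive discriminant `d = b² - 4ac`, and let `(t,u)`, `t,u > 0`, solve the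
Pellian equation `t² - d·u² = 4`.  Write
`M = [[a',b'],[c',d']] = [[(t - bu)/2, au], [-cu, (t + bu)/2]]`.
Then `sign(a' + d') = 1`, `gcd(b', d' - a', -c') = u`, and
`(1/u)·[b', d' - a', -c'] = [a, b, c]`; that is, `B(M) = [a,b,c]`. -/
theorem stmt4 (a b c : ℤ) (hprim : Int.gcd a (Int.gcd b c) = 1)
    (hd : 0 < b ^ 2 - 4 * a * c)
    (t u : ℤ) (ht : 0 < t) (hu : 0 < u)
    (hPell : t ^ 2 - (b ^ 2 - 4 * a * c) * u ^ 2 = 4) :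
    Int.sign ((t - b * u) / 2 + (t + b * u) / 2) = 1 ∧
    (Int.gcd (a * u) (Int.gcd ((t + b * u) / 2 - (t - b * u) / 2) (-(-(c * u)))) : ℤ) = u ∧
    (((a * u : ℤ) : ℚ) / (u : ℚ),
     (((t + b * u) / 2 - (t - b * u) / 2 : ℤ) : ℚ) / (u : ℚ),
     ((-(-(c * u)) : ℤ) : ℚ) / (u : ℚ)) = ((a : ℚ), (b : ℚ), (c : ℚ)) := by
  have h4 : t ^ 2 - (b * u) ^ 2 = 4 * (1 - a * c * u ^ 2) := by linear_combination hPell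
  have h2 : (2 : ℤ) ∣ t - b * u := by
    rcases Int.even_or_odd t with he | ho
    · rcases Int.even_or_odd (b * u) with he2 | ho2
      · obtain ⟨k, hk⟩ := he; obtain ⟨m, hm⟩ := he2; exact ⟨k - m, by omega⟩
      · exfalso
        obtain ⟨k, hk⟩ := he; obtain ⟨m, hm⟩ := ho2
        rw [hk, hm] at h4; ring_nf at h4; omega
    · rcases Int.even_or_odd (b * u) with he2 | ho2
      · exfalso
        obtain ⟨k, hk⟩ := ho; obtain ⟨m, hm⟩ := he2
        rw [hk, hm] at h4; ring_nf at h4; omega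
      · obtain ⟨k, hk⟩ := ho; obtain ⟨m, hm⟩ := ho2; exact ⟨k - m, by omega⟩
  have hsum : (t - b * u) / 2 + (t + b * u) / 2 = t := by omega
  have hdiff : (t + b * u) / 2 - (t - b * u) / 2 = b * u := by omega
  have hu0 : (u : ℚ) ≠ 0 := by exact_mod_cast hu.ne'
  refine ⟨by rw [hsum]; exact Int.sign_eq_one_of_pos ht, ?_, ?_⟩
  · rw [hdiff, neg_neg]
    have : Int.gcd (a * u) (Int.gcd (b * u) (c * u) : ℤ) = Int.gcd a (Int.gcd b c) * u.natAbs := by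
      simp only [Int.gcd, Int.natAbs_mul, Int.natAbs_natCast, Nat.gcd_mul_right]
    rw [this, hprim, one_mul]
    simpa using Int.natAbs_of_nonneg hu.le
  · rw [hdiff]
    push_cast
    field_simp
end

section
/- For every nonzero real number r, ψ(1/4 + ir) − ψ(1/4 − ir) + ψ(3/4 + ir) − ψ(3/4 − ir) = 2i·sinh(2πr)·|Γ(1/2 + 2ir)|², where ψ(z) = Γ′(z)/Γ(z) is the digamma function (the logarithmic derivative of the complex Gamma function). -/
/-- The digamma function `ψ = Γ′/Γ`. -/
noncomputable def digamma (z : ℂ) : ℂ := deriv Complex.Gamma z / Complex.Gamma z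

lemma digamma_reflection (z : ℂ) (h1 : ∀ m : ℕ, z ≠ -m) (h2 : ∀ m : ℕ, (1 : ℂ) - z ≠ -m)
    (h3 : Complex.sin (↑Real.pi * z) ≠ 0) :
    digamma z - digamma (1 - z) =
      -↑Real.pi * Complex.cos (↑Real.pi * z) / Complex.sin (↑Real.pi * z) := by
  have hg1 := Complex.Gamma_ne_zero h1
  have hg2 := Complex.Gamma_ne_zero h2
  have hπ : (Real.pi : ℂ) ≠ 0 := by exact_mod_cast Real.pi_ne_zero
  have hd1 := (Complex.differentiableAt_Gamma z h1).hasDerivAt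
  have hd2 := (Complex.differentiableAt_Gamma (1 - z) h2).hasDerivAt
  have hlin : HasDerivAt (fun w : ℂ => 1 - w) (-1) z := by
    simpa using (hasDerivAt_id z).const_sub (1 : ℂ)
  have hc : HasDerivAt (fun w : ℂ => Complex.Gamma (1 - w))
      (deriv Complex.Gamma (1 - z) * (-1)) z := hd2.comp z hlin
  have hf : HasDerivAt (fun w : ℂ => Complex.Gamma w * Complex.Gamma (1 - w))
      (deriv Complex.Gamma z * Complex.Gamma (1 - z)
        + Complex.Gamma z * (deriv Complex.Gamma (1 - z) * (-1))) z := hd1.mul hc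
  have hsin : HasDerivAt (fun w : ℂ => Complex.sin (↑Real.pi * w))
      (Complex.cos (↑Real.pi * z) * ↑Real.pi) z := by
    simpa using ((hasDerivAt_id z).const_mul (Real.pi : ℂ)).csin
  have hq : HasDerivAt (fun w : ℂ => (Real.pi : ℂ) / Complex.sin (↑Real.pi * w))
      ((0 * Complex.sin (↑Real.pi * z)
        - ↑Real.pi * (Complex.cos (↑Real.pi * z) * ↑Real.pi))
        / Complex.sin (↑Real.pi * z) ^ 2) z :=
    (hasDerivAt_const z (Real.pi : ℂ)).div hsin h3
  have heq : (fun w : ℂ => Complex.Gamma w * Complex.Gamma (1 - w))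
      = fun w : ℂ => (Real.pi : ℂ) / Complex.sin (↑Real.pi * w) :=
    funext Complex.Gamma_mul_Gamma_one_sub
  rw [heq] at hf
  have key := hf.unique hq
  have hbd : Complex.Gamma z * Complex.Gamma (1 - z)
      = (Real.pi : ℂ) / Complex.sin (↑Real.pi * z) := Complex.Gamma_mul_Gamma_one_sub z
  have hnum : deriv Complex.Gamma z * Complex.Gamma (1 - z)
      - Complex.Gamma z * deriv Complex.Gamma (1 - z)
      = (0 * Complex.sin (↑Real.pi * z)
        - ↑Real.pi * (Complex.cos (↑Real.pi * z) * ↑Real.pi))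
        / Complex.sin (↑Real.pi * z) ^ 2 := by linear_combination key
  rw [digamma, digamma, div_sub_div _ _ hg1 hg2, hnum, hbd]
  field_simp
  ring

lemma ne_neg_nat {z : ℂ} (hz : 0 < z.re) (m : ℕ) : z ≠ -m := by
  intro h
  rw [h] at hz
  simp only [Complex.neg_re, Complex.natCast_re] at hz
  have : (0 : ℝ) ≤ (m : ℝ) := Nat.cast_nonneg m
  linarith

/-- For every nonzero real `r`,
`ψ(1/4 + ir) - ψ(1/4 - ir) + ψ(3/4 + ir) - ψ(3/4 - ir)
  = 2i·sinh(2πr)·|Γ(1/2 + 2ir)|²`. -/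
theorem stmt16 (r : ℝ) (hr : r ≠ 0) :
    digamma (1 / 4 + (r : ℂ) * Complex.I) - digamma (1 / 4 - (r : ℂ) * Complex.I)
        + digamma (3 / 4 + (r : ℂ) * Complex.I) - digamma (3 / 4 - (r : ℂ) * Complex.I)
      = 2 * Complex.I * (Real.sinh (2 * Real.pi * r) : ℂ) *
          ((‖Complex.Gamma (1 / 2 + 2 * (r : ℂ) * Complex.I)‖ : ℝ) : ℂ) ^ 2 := by
  set z₁ : ℂ := 1 / 4 + (r : ℂ) * Complex.I with hz₁
  set z₂ : ℂ := 3 / 4 + (r : ℂ) * Complex.I with hz₂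
  set w : ℂ := 1 / 2 + 2 * (r : ℂ) * Complex.I with hw₀
  set t : ℂ := ((Real.sqrt 2 / 2 : ℝ) : ℂ) with htdef
  set c : ℂ := ((Real.cosh (Real.pi * r) : ℝ) : ℂ) with hcdef
  set s : ℂ := ((Real.sinh (Real.pi * r) : ℝ) : ℂ) with hsdef
  have hre1 : z₁.re = 1 / 4 := by simp [hz₁]
  have hre2 : z₂.re = 3 / 4 := by simp [hz₂]
  have hre1' : ((1 : ℂ) - z₁).re = 3 / 4 := by simp [Complex.sub_re, hre1]; norm_num
  have hre2' : ((1 : ℂ) - z₂).re = 1 / 4 := by simp [Complex.sub_re, hre2]; norm_num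
  -- trig values
  have ht2 : t ^ 2 = 1 / 2 := by
    rw [htdef]
    norm_cast
    rw [div_pow, Real.sq_sqrt (by norm_num : (2:ℝ) ≥ 0)]
    norm_num
  have hpz1 : (Real.pi : ℂ) * z₁ = (Real.pi : ℂ) / 4 + ((Real.pi * r : ℝ) : ℂ) * Complex.I := by
    rw [hz₁]; push_cast; ring
  have hs4 : Complex.sin ((Real.pi : ℂ) / 4) = t := by
    rw [show (Real.pi : ℂ) / 4 = ((Real.pi / 4 : ℝ) : ℂ) by push_cast; ring,
      ← Complex.ofReal_sin, Real.sin_pi_div_four, htdef]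
  have hc4 : Complex.cos ((Real.pi : ℂ) / 4) = t := by
    rw [show (Real.pi : ℂ) / 4 = ((Real.pi / 4 : ℝ) : ℂ) by push_cast; ring,
      ← Complex.ofReal_cos, Real.cos_pi_div_four, htdef]
  have ha : Complex.sin (↑Real.pi * z₁) = t * c + t * s * Complex.I := by
    rw [hpz1, Complex.sin_add, Complex.cos_mul_I, Complex.sin_mul_I,
      ← Complex.ofReal_cosh, ← Complex.ofReal_sinh, hs4, hc4, hcdef, hsdef]
    ring
  have hb : Complex.cos (↑Real.pi * z₁) = t * c - t * s * Complex.I := by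
    rw [hpz1, Complex.cos_add, Complex.cos_mul_I, Complex.sin_mul_I,
      ← Complex.ofReal_cosh, ← Complex.ofReal_sinh, hs4, hc4, hcdef, hsdef]
    ring
  have hpz2 : (Real.pi : ℂ) * z₂ = ↑Real.pi * z₁ + ↑Real.pi / 2 := by
    rw [hz₁, hz₂]; push_cast; ring
  have ha2 : Complex.sin (↑Real.pi * z₂) = t * c - t * s * Complex.I := by
    rw [hpz2, Complex.sin_add_pi_div_two, hb]
  have hb2 : Complex.cos (↑Real.pi * z₂) = -(t * c + t * s * Complex.I) := by
    rw [hpz2, Complex.cos_add_pi_div_two, ha]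
  have hwsin : Complex.sin (↑Real.pi * w) = ((Real.cosh (2 * Real.pi * r) : ℝ) : ℂ) := by
    have h : (Real.pi : ℂ) * w = ((2 * Real.pi * r : ℝ) : ℂ) * Complex.I + ↑Real.pi / 2 := by
      rw [hw₀]; push_cast; ring
    rw [h, Complex.sin_add_pi_div_two, Complex.cos_mul_I, ← Complex.ofReal_cosh]
  -- nonvanishing
  have hcoshpos : (0 : ℝ) < Real.cosh (Real.pi * r) := Real.cosh_pos _
  have ht0 : t ≠ 0 := by
    rw [htdef]
    simp only [ne_eq, Complex.ofReal_eq_zero]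
    positivity
  have hu0 : c + s * Complex.I ≠ 0 := by
    intro h
    have h' := congrArg Complex.re h
    simp only [hcdef, hsdef, Complex.add_re, Complex.mul_re, Complex.ofReal_re,
      Complex.ofReal_im, Complex.I_re, Complex.I_im, Complex.zero_re] at h'
    norm_num at h'
    linarith
  have hv0 : c - s * Complex.I ≠ 0 := by
    intro h
    have h' := congrArg Complex.re h
    simp only [hcdef, hsdef, Complex.sub_re, Complex.mul_re, Complex.ofReal_re,
      Complex.ofReal_im, Complex.I_re, Complex.I_im, Complex.zero_re] at h'
    norm_num at h'
    linarith
  have ha0 : Complex.sin (↑Real.pi * z₁) ≠ 0 := by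
    rw [ha, show t * c + t * s * Complex.I = t * (c + s * Complex.I) by ring]
    exact mul_ne_zero ht0 hu0
  have ha20 : Complex.sin (↑Real.pi * z₂) ≠ 0 := by
    rw [ha2, show t * c - t * s * Complex.I = t * (c - s * Complex.I) by ring]
    exact mul_ne_zero ht0 hv0
  have hC2pos : (0 : ℝ) < Real.cosh (2 * Real.pi * r) := Real.cosh_pos _
  have hC20 : ((Real.cosh (2 * Real.pi * r) : ℝ) : ℂ) ≠ 0 := by
    simp only [ne_eq, Complex.ofReal_eq_zero]
    linarith
  have hπ : (Real.pi : ℂ) ≠ 0 := by exact_mod_cast Real.pi_ne_zero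
  -- double angle identities
  have hS2 : ((Real.sinh (2 * Real.pi * r) : ℝ) : ℂ) = 2 * s * c := by
    rw [show 2 * Real.pi * r = 2 * (Real.pi * r) by ring, Real.sinh_two_mul, hcdef, hsdef]
    push_cast; ring
  have hC2 : ((Real.cosh (2 * Real.pi * r) : ℝ) : ℂ) = c ^ 2 + s ^ 2 := by
    rw [show 2 * Real.pi * r = 2 * (Real.pi * r) by ring, Real.cosh_two_mul, hcdef, hsdef]
    push_cast
    ring
  -- Gamma factor
  have hconj : (starRingEnd ℂ) w = 1 - w := by
    rw [hw₀]
    simp only [map_add, map_mul, map_one, map_div₀, map_ofNat, Complex.conj_I,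
      Complex.conj_ofReal, map_one]
    ring
  have hGam : ((‖Complex.Gamma w‖ : ℝ) : ℂ) ^ 2
      = (Real.pi : ℂ) / Complex.sin (↑Real.pi * w) := by
    rw [← Complex.Gamma_mul_Gamma_one_sub w, ← hconj, Complex.Gamma_conj,
      Complex.mul_conj]
    norm_cast
    exact Complex.sq_norm _
  -- digamma reflection at z₁ and z₂
  have hA := digamma_reflection z₁ (fun m => ne_neg_nat (by rw [hre1]; norm_num) m)
    (fun m => ne_neg_nat (by rw [hre1']; norm_num) m) ha0
  have hB := digamma_reflection z₂ (fun m => ne_neg_nat (by rw [hre2]; norm_num) m)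
    (fun m => ne_neg_nat (by rw [hre2']; norm_num) m) ha20
  have e1 : (3 / 4 : ℂ) - (r : ℂ) * Complex.I = 1 - z₁ := by rw [hz₁]; ring
  have e2 : (1 / 4 : ℂ) - (r : ℂ) * Complex.I = 1 - z₂ := by rw [hz₂]; ring
  rw [e1, e2, hGam, hwsin, hS2, hC2]
  rw [ha, hb] at hA
  rw [ha2, hb2] at hB
  have hI : Complex.I ^ 2 = -1 := Complex.I_sq
  have hfin : -↑Real.pi * (t * c - t * s * Complex.I) / (t * c + t * s * Complex.I)
      + -↑Real.pi * -(t * c + t * s * Complex.I) / (t * c - t * s * Complex.I)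
      = 2 * Complex.I * (2 * s * c) * (↑Real.pi / (c ^ 2 + s ^ 2)) := by
    have hcs0 : (c : ℂ) ^ 2 + s ^ 2 ≠ 0 := by
      rw [hC2] at hC20; exact hC20
    have hR : 2 * Complex.I * (2 * s * c) * (↑Real.pi / (c ^ 2 + s ^ 2))
        = 4 * Complex.I * s * c * ↑Real.pi / (c ^ 2 + s ^ 2) := by ring
    rw [show t * c + t * s * Complex.I = t * (c + s * Complex.I) by ring,
      show t * c - t * s * Complex.I = t * (c - s * Complex.I) by ring,
      div_add_div _ _ (mul_ne_zero ht0 hu0) (mul_ne_zero ht0 hv0), hR,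
      div_eq_div_iff (mul_ne_zero (mul_ne_zero ht0 hu0) (mul_ne_zero ht0 hv0)) hcs0]
    linear_combination (4 * (Real.pi : ℂ) * t ^ 2 * s ^ 3 * c * Complex.I) * hI
  linear_combination hA + hB + hfin
end
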